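/- Let G : (0,∞) → ℝ be continuously differentiable and positive on (0, c₀), satisfying: (i) G is non-increasing on (0, c₀); (ii) lim_{ρ→0⁺} (ρ G'(ρ) + α G(ρ))/G(ρ) = 0 for some α > 0. Then for every l > 0, lim_{ρ→0⁺} l^α G(lρ)/G(ρ) = 1. -/

import Mathlib

open Set Filter Topology

private lemma aux_main (G G' : ℝ → ℝ) (c₀ α : ℝ) (hc₀ : 0 < c₀) (hα : 0 < α)
    (hderiv : ∀ ρ ∈ Set.Ioo (0:ℝ) c₀, HasDerivAt G (G' ρ) ρ)
    (hpos : ∀ ρ ∈ Set.Ioo (0:ℝ) c₀, 0 < G ρ)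
    (hlim : Tendsto (fun ρ => (ρ * G' ρ + α * G ρ) / G ρ) (𝓝[>] 0) (𝓝 0))
    (l : ℝ) (hl : 1 ≤ l) :
    Tendsto (fun ρ => l ^ α * G (l * ρ) / G ρ) (𝓝[>] 0) (𝓝 1) := by
  have hl0 : (0:ℝ) < l := lt_of_lt_of_le one_pos hl
  rw [Metric.tendsto_nhds]
  intro ε' hε'
  -- continuity of t ↦ l ^ t at 0
  have hcrpow : ContinuousAt (fun t : ℝ => l ^ t) 0 := by
    have h1 : Continuous fun t : ℝ => Real.exp (Real.log l * t) := by continuity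
    have h2 : (fun t : ℝ => l ^ t) = fun t : ℝ => Real.exp (Real.log l * t) := by
      funext t; rw [Real.rpow_def_of_pos hl0]
    rw [h2]; exact h1.continuousAt
  obtain ⟨ε0, hε0, hball⟩ := Metric.continuousAt_iff.mp hcrpow ε' hε'
  set ε := ε0 / 2 with hεdef
  have hε : 0 < ε := by positivity
  have hclose : ∀ t : ℝ, |t| < ε0 → |l ^ t - 1| < ε' := by
    intro t ht
    have hd : dist t 0 < ε0 := by simpa [Real.dist_eq] using ht
    have := hball hd
    simpa [Real.dist_eq, Real.rpow_zero] using this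
  have hub : l ^ ε < 1 + ε' := by
    have := hclose ε (by rw [abs_of_pos hε]; linarith [hε0])
    have := (abs_lt.mp this).2; linarith
  have hlb : 1 - ε' < l ^ (-ε) := by
    have := hclose (-ε) (by rw [abs_neg, abs_of_pos hε]; linarith [hε0])
    have := (abs_lt.mp this).1; linarith
  -- get δ from hlim
  have h1 : ∀ᶠ ρ in 𝓝[>] (0:ℝ), |(ρ * G' ρ + α * G ρ) / G ρ| < ε := by
    have := Metric.tendsto_nhds.mp hlim ε hε
    simpa only [Real.dist_eq, sub_zero] using this
  obtain ⟨δ', hδ'mem, hδ'⟩ := mem_nhdsGT_iff_exists_Ioo_subset.mp h1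
  have hδ'0 : (0:ℝ) < δ' := hδ'mem
  set δ := min δ' c₀ with hδdef
  have hδ0 : (0:ℝ) < δ := lt_min hδ'0 hc₀
  have hδc₀ : δ ≤ c₀ := min_le_right _ _
  have hδδ' : δ ≤ δ' := min_le_left _ _
  set S := Set.Ioo (0:ℝ) δ with hSdef
  -- key estimates on S
  have hkey : ∀ x ∈ S, 0 < G x ∧ -ε * G x < x * G' x + α * G x ∧ x * G' x + α * G x < ε * G x := by
    intro x hx
    have hx0 : 0 < x := hx.1
    have hxc : x < c₀ := lt_of_lt_of_le hx.2 hδc₀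
    have hG : 0 < G x := hpos x ⟨hx0, hxc⟩
    have hq : |(x * G' x + α * G x) / G x| < ε := hδ' ⟨hx0, lt_of_lt_of_le hx.2 hδδ'⟩
    obtain ⟨hq1, hq2⟩ := abs_lt.mp hq
    refine ⟨hG, ?_, ?_⟩
    · have := (lt_div_iff₀ hG).mp hq1; linarith
    · have := (div_lt_iff₀ hG).mp hq2; linarith
  -- derivatives of x^c * G x on S
  have hF : ∀ c : ℝ, ∀ x ∈ S, HasDerivAt (fun y => y ^ c * G y)
      (x ^ (c - 1) * (c * G x + x * G' x)) x := by
    intro c x hx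
    have hx0 : 0 < x := hx.1
    have hxc : x < c₀ := lt_of_lt_of_le hx.2 hδc₀
    have h1 : HasDerivAt (fun y : ℝ => y ^ c) (c * x ^ (c - 1)) x :=
      Real.hasDerivAt_rpow_const (Or.inl hx0.ne')
    have h2 := hderiv x ⟨hx0, hxc⟩
    have hxp : x ^ c = x ^ (c - 1) * x := by
      rw [← Real.rpow_add_one hx0.ne']; ring_nf
    have := h1.mul h2
    refine this.congr_deriv ?_
    rw [hxp]; ring
  have hScont : ∀ c : ℝ, ContinuousOn (fun y : ℝ => y ^ c * G y) S := by
    intro c x hx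
    exact ((hF c x hx).continuousAt).continuousWithinAt
  have hSconv : Convex ℝ S := convex_Ioo _ _
  have hSint : interior S = S := interior_Ioo
  -- F₊ strictly monotone
  have hmonoP : StrictMonoOn (fun y : ℝ => y ^ (α + ε) * G y) S := by
    apply strictMonoOn_of_deriv_pos hSconv (hScont _)
    intro x hx
    rw [hSint] at hx
    rw [(hF (α + ε) x hx).deriv]
    obtain ⟨hG, hlow, _⟩ := hkey x hx
    have h1 : 0 < x ^ (α + ε - 1) := Real.rpow_pos_of_pos hx.1 _
    have h2 : 0 < (α + ε) * G x + x * G' x := by nlinarith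
    positivity
  -- F₋ strictly antitone
  have hmonoN : StrictAntiOn (fun y : ℝ => y ^ (α - ε) * G y) S := by
    apply strictAntiOn_of_deriv_neg hSconv (hScont _)
    intro x hx
    rw [hSint] at hx
    rw [(hF (α - ε) x hx).deriv]
    obtain ⟨hG, _, hhigh⟩ := hkey x hx
    have h1 : 0 < x ^ (α - ε - 1) := Real.rpow_pos_of_pos hx.1 _
    have h2 : (α - ε) * G x + x * G' x < 0 := by nlinarith
    exact mul_neg_of_pos_of_neg h1 h2
  -- conclude
  have hmem : Set.Ioo (0:ℝ) (δ / l) ∈ 𝓝[>] (0:ℝ) :=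
    Ioo_mem_nhdsGT_of_mem ⟨le_refl 0, by positivity⟩
  filter_upwards [hmem] with ρ hρ
  have hρ0 : 0 < ρ := hρ.1
  have hρδl : ρ < δ / l := hρ.2
  have hlρδ : l * ρ < δ := by
    have := (lt_div_iff₀' hl0).mp hρδl; linarith
  have hρδ : ρ < δ := lt_of_lt_of_le hρδl (div_le_self hδ0.le hl)
  have hρS : ρ ∈ S := ⟨hρ0, hρδ⟩
  have hlρS : l * ρ ∈ S := ⟨by positivity, hlρδ⟩
  have hle : ρ ≤ l * ρ := le_mul_of_one_le_left hρ0.le hl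
  have hg : 0 < G ρ := (hkey ρ hρS).1
  have hgl : 0 < G (l * ρ) := (hkey _ hlρS).1
  -- lower bound : l^(-ε) ≤ ratio
  have hA : ρ ^ (α + ε) * G ρ ≤ (l * ρ) ^ (α + ε) * G (l * ρ) :=
    hmonoP.monotoneOn hρS hlρS hle
  have hB : (l * ρ) ^ (α - ε) * G (l * ρ) ≤ ρ ^ (α - ε) * G ρ :=
    hmonoN.antitoneOn hρS hlρS hle
  rw [Real.mul_rpow hl0.le hρ0.le] at hA hB
  have hρp1 : 0 < ρ ^ (α + ε) := Real.rpow_pos_of_pos hρ0 _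
  have hρp2 : 0 < ρ ^ (α - ε) := Real.rpow_pos_of_pos hρ0 _
  have hA' : G ρ ≤ l ^ (α + ε) * G (l * ρ) := by nlinarith
  have hB' : l ^ (α - ε) * G (l * ρ) ≤ G ρ := by nlinarith
  have hid1 : l ^ (-ε) * l ^ (α + ε) = l ^ α := by
    rw [← Real.rpow_add hl0]; ring_nf
  have hid2 : l ^ ε * l ^ (α - ε) = l ^ α := by
    rw [← Real.rpow_add hl0]; ring_nf
  have hlε : 0 < l ^ ε := Real.rpow_pos_of_pos hl0 _
  have hlnε : 0 < l ^ (-ε) := Real.rpow_pos_of_pos hl0 _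
  have hlow : l ^ (-ε) ≤ l ^ α * G (l * ρ) / G ρ := by
    rw [le_div_iff₀ hg]
    calc l ^ (-ε) * G ρ ≤ l ^ (-ε) * (l ^ (α + ε) * G (l * ρ)) :=
          mul_le_mul_of_nonneg_left hA' hlnε.le
      _ = l ^ α * G (l * ρ) := by rw [← mul_assoc, hid1]
  have hhigh : l ^ α * G (l * ρ) / G ρ ≤ l ^ ε := by
    rw [div_le_iff₀ hg]
    calc l ^ α * G (l * ρ) = l ^ ε * (l ^ (α - ε) * G (l * ρ)) := by rw [← mul_assoc, hid2]
      _ ≤ l ^ ε * G ρ := mul_le_mul_of_nonneg_left hB' hlε.le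
  rw [Real.dist_eq, abs_lt]
  constructor <;> linarith

/-- regular variation `l^α G(lρ)/G(ρ) → 1` as `ρ → 0⁺`. -/
theorem stmt7 (G G' : ℝ → ℝ) (c₀ α : ℝ) (hc₀ : 0 < c₀) (hα : 0 < α)
    (hderiv : ∀ ρ ∈ Set.Ioo (0:ℝ) c₀, HasDerivAt G (G' ρ) ρ)
    (hcont : ContinuousOn G' (Set.Ioo 0 c₀))
    (hpos : ∀ ρ ∈ Set.Ioo (0:ℝ) c₀, 0 < G ρ)
    (hmono : AntitoneOn G (Set.Ioo 0 c₀))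
    (hlim : Tendsto (fun ρ => (ρ * G' ρ + α * G ρ) / G ρ) (𝓝[>] 0) (𝓝 0)) :
    ∀ l > (0:ℝ),
      Tendsto (fun ρ => l ^ α * G (l * ρ) / G ρ) (𝓝[>] 0) (𝓝 1) := by
  intro l hl0
  rcases le_or_gt 1 l with hl | hl
  · exact aux_main G G' c₀ α hc₀ hα hderiv hpos hlim l hl
  · -- reduce to 1/l ≥ 1
    have hinv : (1:ℝ) ≤ 1 / l := (one_le_div hl0).mpr hl.le
    have hmain := aux_main G G' c₀ α hc₀ hα hderiv hpos hlim (1 / l) hinv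
    have hcomp : Tendsto (fun ρ : ℝ => l * ρ) (𝓝[>] (0:ℝ)) (𝓝[>] (0:ℝ)) := by
      apply tendsto_nhdsWithin_of_tendsto_nhds_of_eventually_within
      · have : Tendsto (fun ρ : ℝ => l * ρ) (𝓝 0) (𝓝 (l * 0)) :=
          (continuous_const.mul continuous_id).tendsto 0
        simpa using this.mono_left nhdsWithin_le_nhds
      · exact eventually_mem_nhdsWithin.mono fun x hx => mul_pos hl0 hx
    have h2 := hmain.comp hcomp
    have h3 := h2.inv₀ one_ne_zero
    rw [inv_one] at h3
    apply h3.congr'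
    have hmem : Set.Ioo (0:ℝ) c₀ ∈ 𝓝[>] (0:ℝ) :=
      Ioo_mem_nhdsGT_of_mem ⟨le_refl 0, hc₀⟩
    filter_upwards [hmem] with ρ hρ
    have hρ0 : 0 < ρ := hρ.1
    have hlρ : l * ρ ∈ Set.Ioo (0:ℝ) c₀ := by
      constructor
      · positivity
      · calc l * ρ < 1 * ρ := by nlinarith
          _ = ρ := one_mul ρ
          _ < c₀ := hρ.2
    have hg : 0 < G ρ := hpos ρ hρ
    have hgl : 0 < G (l * ρ) := hpos _ hlρ
    have hsimp : (1 / l) * (l * ρ) = ρ := by field_simp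
    have hpowinv : (1 / l) ^ α = (l ^ α)⁻¹ := by
      rw [one_div, Real.inv_rpow hl0.le]
    have hlα : 0 < l ^ α := Real.rpow_pos_of_pos hl0 _
    show ((1 / l) ^ α * G ((1 / l) * (l * ρ)) / G (l * ρ))⁻¹ = l ^ α * G (l * ρ) / G ρ
    rw [hsimp, hpowinv]
    field_simp
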